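/- Let M_k (k ≥ 2) be the (k+1)×(k+1) symmetric matrix with diagonal (d₀,…,d_k) and entries (M_k)_{ij} = a_{max(i,j)} for i ≠ j (indices 0..k), where a₁,…,a_k are nonzero reals and d₀,…,d_k are reals. Then det M_k = (d_k − 2a_k²/a_{k−1} + a_k² d_{k−1}/a_{k−1}²)·det M_{k−1} − a_k²(1 − d_{k−1}/a_{k−1})²·det M_{k−2}, where M_{k−1}, M_{k−2} are the corresponding leading principal submatrices. -/

import Mathlib

open Matrix

/-- The (k+1)×(k+1) matrix with diagonal (d₀,…,d_k) and (i,j)-entry a_{max(i,j)}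
for i ≠ j. -/
noncomputable def Mmat (d a : ℕ → ℝ) (k : ℕ) : Matrix (Fin (k + 1)) (Fin (k + 1)) ℝ :=
  Matrix.of fun i j => if i = j then d i else a (max (i : ℕ) (j : ℕ))

lemma Mmat_submatrix (d a : ℕ → ℝ) (m : ℕ) :
    (Mmat d a (m+1)).submatrix Fin.castSucc Fin.castSucc = Mmat d a m := by
  ext i j
  simp only [Mmat, Matrix.submatrix_apply, Matrix.of_apply, Fin.coe_castSucc,
    Fin.castSucc_inj]

lemma det_updateCol_single_last {m : ℕ} (B : Matrix (Fin (m+1)) (Fin (m+1)) ℝ) :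
    (B.updateCol (Fin.last m) (Pi.single (Fin.last m) 1)).det
      = (B.submatrix Fin.castSucc Fin.castSucc).det := by
  rw [Matrix.det_succ_column _ (Fin.last m)]
  rw [Fintype.sum_eq_single (Fin.last m) (fun i hi => by
    simp [Matrix.updateCol_apply, Pi.single_eq_of_ne hi])]
  rw [Matrix.submatrix_updateCol_succAbove]
  simp only [Matrix.updateCol_apply, if_pos rfl, Pi.single_eq_same, Fin.succAbove_last,
    Fin.val_last, mul_one]
  simp [Even.neg_one_pow (⟨m, rfl⟩ : Even (m+m))]

theorem det_M_recursion (d a : ℕ → ℝ) (k : ℕ) (hk : 2 ≤ k)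
    (ha : ∀ i : ℕ, 1 ≤ i → i ≤ k → a i ≠ 0) :
    (Mmat d a k).det =
      (d k - 2 * (a k) ^ 2 / a (k - 1) + (a k) ^ 2 * d (k - 1) / (a (k - 1)) ^ 2) *
        (Mmat d a (k - 1)).det -
      (a k) ^ 2 * (1 - d (k - 1) / a (k - 1)) ^ 2 * (Mmat d a (k - 2)).det := by
  obtain ⟨m, rfl⟩ : ∃ m, k = m + 2 := ⟨k - 2, by omega⟩
  have h1 : a (m+1) ≠ 0 := ha (m+1) (by omega) (by omega)
  show (Mmat d a (m+2)).det =
      (d (m+2) - 2 * (a (m+2)) ^ 2 / a (m+1) + (a (m+2)) ^ 2 * d (m+1) / (a (m+1)) ^ 2) *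
        (Mmat d a (m+1)).det -
      (a (m+2)) ^ 2 * (1 - d (m+1) / a (m+1)) ^ 2 * (Mmat d a m).det
  set c : ℝ := a (m+2) / a (m+1) with hc
  set M : Matrix (Fin (m+3)) (Fin (m+3)) ℝ := Mmat d a (m+2) with hM
  set N : Matrix (Fin (m+2)) (Fin (m+2)) ℝ := Mmat d a (m+1) with hNdef
  set P : Matrix (Fin (m+1)) (Fin (m+1)) ℝ := Mmat d a m with hPdef
  set i0 : Fin (m+3) := Fin.last (m+2) with hi0
  set j0 : Fin (m+3) := (Fin.last (m+1)).castSucc with hj0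
  have hij : i0 ≠ j0 := by
    simp [hi0, hj0, Fin.ext_iff]
  set A : Matrix (Fin (m+3)) (Fin (m+3)) ℝ :=
    M.updateRow i0 (M i0 + (-c) • M j0) with hA
  have hAdet : A.det = M.det := Matrix.det_updateRow_add_smul_self M hij (-c)
  -- row entries of A at row i0
  have hrow : ∀ j : Fin (m+3), A i0 j = M i0 j - c * M j0 j := by
    intro j
    simp [hA, Matrix.updateRow_self, sub_eq_add_neg]
  -- submatrices of A obtained by deleting row i0
  have hsub : ∀ j : Fin (m+3),
      A.submatrix i0.succAbove j.succAbove = M.submatrix Fin.castSucc j.succAbove := by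
    intro j
    rw [hA, Matrix.submatrix_updateRow_succAbove]
    rw [hi0, Fin.succAbove_last]
  have hNsub : M.submatrix Fin.castSucc Fin.castSucc = N := Mmat_submatrix d a (m+1)
  have hPsub : N.submatrix Fin.castSucc Fin.castSucc = P := Mmat_submatrix d a m
  -- the interesting submatrix: delete row i0 and column j0
  have hSsub : M.submatrix Fin.castSucc j0.succAbove
      = N.updateCol (Fin.last (m+1)) (fun _ => a (m+2)) := by
    ext i j
    simp only [Matrix.submatrix_apply]
    rcases eq_or_ne j (Fin.last (m+1)) with h | h
    · subst h
      rw [hj0, Fin.succAbove_of_le_castSucc _ _ le_rfl]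
      have hine : (i.castSucc : Fin (m+3)) ≠ (Fin.last (m+1)).succ := by
        simp [Fin.ext_iff, Fin.succ_last]
        omega
      simp only [hM, Mmat, Matrix.of_apply, if_neg hine, Matrix.updateCol_self]
      congr 1
      simp only [Fin.succ_last, Fin.coe_castSucc, Fin.val_last]
      omega
    · have hlt : (j.castSucc : Fin (m+3)) < j0 := by
        rw [hj0]
        simp only [Fin.castSucc_lt_castSucc_iff]
        exact lt_of_le_of_ne (Fin.le_last j) h
      rw [Fin.succAbove_of_castSucc_lt _ _ hlt]
      rw [Matrix.updateCol_ne h]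
      simp only [Matrix.submatrix_apply, hM, hNdef, Mmat, Matrix.of_apply,
        Fin.coe_castSucc, Fin.castSucc_inj]
  -- determinant of that submatrix
  have hvec : (fun _ : Fin (m+2) => a (m+2))
      = c • (((fun i => N i (Fin.last (m+1)))
          + (a (m+1) - d (m+1)) • (Pi.single (Fin.last (m+1)) 1 : Fin (m+2) → ℝ))) := by
    funext i
    rcases eq_or_ne i (Fin.last (m+1)) with h | h
    · subst h
      simp only [Pi.smul_apply, Pi.add_apply, Pi.single_eq_same, hNdef, Mmat,
        Matrix.of_apply, if_pos rfl, smul_eq_mul, if_true, Fin.val_last]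
      rw [hc]
      field_simp
      ring
    · have hi' : (i : ℕ) < m + 1 := Fin.val_lt_last h
      simp only [Pi.smul_apply, Pi.add_apply, Pi.single_eq_of_ne h, hNdef, Mmat,
        Matrix.of_apply, if_neg h, smul_eq_mul, mul_zero, add_zero, Fin.val_last]
      rw [max_eq_right (by omega : (i:ℕ) ≤ m + 1), hc, div_mul_cancel₀ _ h1]
  have hSdet : (N.updateCol (Fin.last (m+1)) (fun _ => a (m+2))).det
      = c * (N.det + (a (m+1) - d (m+1)) * P.det) := by
    rw [hvec, Matrix.det_updateCol_smul, Matrix.det_updateCol_add,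
      Matrix.det_updateCol_smul, det_updateCol_single_last, hPsub,
      Matrix.updateCol_eq_self]
  -- entries of row i0 of A
  have hz : ∀ jj : Fin (m+1), A i0 ((jj.castSucc).castSucc) = 0 := by
    intro jj
    have hj' : (jj : ℕ) < m + 1 := jj.isLt
    have h1ne : i0 ≠ (jj.castSucc).castSucc := by simp [hi0, Fin.ext_iff]; omega
    have h2ne : j0 ≠ (jj.castSucc).castSucc := by simp [hj0, Fin.ext_iff]; omega
    rw [hrow]
    simp only [hi0, hj0] at h1ne h2ne
    simp only [hM, Mmat, Matrix.of_apply, if_neg h1ne, if_neg h2ne, hi0, hj0,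
      Fin.val_last, Fin.coe_castSucc]
    rw [max_eq_left (by omega : (jj:ℕ) ≤ m + 2), max_eq_left (by omega : (jj:ℕ) ≤ m + 1),
      hc, div_mul_cancel₀ _ h1, sub_self]
  have hv1 : A i0 j0 = a (m+2) - c * d (m+1) := by
    rw [hrow]
    have hne : i0 ≠ j0 := hij
    simp only [hi0, hj0] at hne
    rw [show M i0 j0 = a (m+2) from by
      simp only [hM, Mmat, Matrix.of_apply, if_neg hne, hi0, hj0, Fin.val_last,
        Fin.coe_castSucc]
      congr 1
      simp]
    rw [show M j0 j0 = d (m+1) from by simp [hM, Mmat, hj0]]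
  have hv2 : A i0 i0 = d (m+2) - c * a (m+2) := by
    rw [hrow]
    have hne : j0 ≠ i0 := hij.symm
    simp only [hi0, hj0] at hne
    rw [show M i0 i0 = d (m+2) from by simp [hM, Mmat, hi0]]
    rw [show M j0 i0 = a (m+2) from by
      simp only [hM, Mmat, Matrix.of_apply, if_neg hne, hi0, hj0, Fin.val_last,
        Fin.coe_castSucc]
      congr 1
      simp]
  -- Laplace expansion along the last row
  have expand : M.det = (d (m+2) - c * a (m+2)) * N.det
      - (a (m+2) - c * d (m+1)) * (c * (N.det + (a (m+1) - d (m+1)) * P.det)) := by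
    rw [← hAdet, Matrix.det_succ_row A i0]
    rw [Fin.sum_univ_castSucc, Fin.sum_univ_castSucc]
    have hzero : ∀ jj : Fin (m+1),
        (-1:ℝ) ^ ((i0:ℕ) + ((jj.castSucc).castSucc : Fin (m+3)))
          * A i0 ((jj.castSucc).castSucc)
          * (A.submatrix i0.succAbove ((jj.castSucc).castSucc : Fin (m+3)).succAbove).det
          = 0 := by
      intro jj
      rw [hz jj]
      ring
    rw [Finset.sum_congr rfl (fun jj _ => hzero jj), Finset.sum_const, smul_zero, zero_add]
    have hlastcast : ((Fin.last (m+1)).castSucc : Fin (m+3)) = j0 := rfl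
    rw [hlastcast, hv1, hv2, hsub j0, hsub i0, hSsub, hSdet]
    rw [hi0, Fin.succAbove_last, hNsub]
    have hsign1 : ((i0:ℕ) + (j0:ℕ)) = 2*(m+1) + 1 := by simp [hi0, hj0]; ring
    have hsign2 : ((i0:ℕ) + (i0:ℕ)) = 2*(m+2) := by simp [hi0]; ring
    rw [hsign1, hsign2, pow_succ, pow_mul, pow_mul]
    simp only [neg_one_sq, one_pow, one_mul, mul_one]
    ring
  rw [expand, hc]
  field_simp
  ring
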